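/- arXiv:1705.06312 — 4 statements merged into one kernel-verified Lean document; each statement's English description precedes it below -/
import Mathlib

section
/- Every propositional tautology, with propositional variables substituted by matching logic patterns of a common sort s, is a valid matching logic pattern: its evaluation under any valuation in any model is the full carrier M_s. -/
namespace ML

structure Signature where
  S : Type
  Sym : Type
  n : Sym → ℕ
  arg : (f : Sym) → Fin (n f) → S
  res : Sym → S

inductive Pattern (σ : Signature) : σ.S → Type
  | var (s : σ.S) (x : ℕ) : Pattern σ s
  | app (f : σ.Sym) (args : ∀ i : Fin (σ.n f), Pattern σ (σ.arg f i)) : Pattern σ (σ.res f)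
  | neg {s : σ.S} (φ : Pattern σ s) : Pattern σ s
  | and {s : σ.S} (φ ψ : Pattern σ s) : Pattern σ s
  | ex {s : σ.S} (s' : σ.S) (x : ℕ) (φ : Pattern σ s) : Pattern σ s

namespace Pattern

variable {σ : Signature}

def or {s : σ.S} (φ ψ : Pattern σ s) : Pattern σ s := .neg (.and (.neg φ) (.neg ψ))

def imp {s : σ.S} (φ ψ : Pattern σ s) : Pattern σ s := .or (.neg φ) ψ

def piff {s : σ.S} (φ ψ : Pattern σ s) : Pattern σ s := .and (.imp φ ψ) (.imp ψ φ)

def all {s : σ.S} (s' : σ.S) (x : ℕ) (φ : Pattern σ s) : Pattern σ s :=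
  .neg (.ex s' x (.neg φ))

end Pattern

/-- Free variables of a pattern, as sort-variable pairs. -/
def FV {σ : Signature} : {s : σ.S} → Pattern σ s → Set ((s : σ.S) × ℕ)
  | _, .var s x => {⟨s, x⟩}
  | _, .app _ args => ⋃ i, FV (args i)
  | _, .neg φ => FV φ
  | _, .and φ ψ => FV φ ∪ FV ψ
  | _, .ex s' x φ => FV φ \ {⟨s', x⟩}

structure Model (σ : Signature) where
  carrier : σ.S → Type
  nonempty : ∀ s, Nonempty (carrier s)
  interp : (f : σ.Sym) → (∀ i : Fin (σ.n f), carrier (σ.arg f i)) → Set (carrier (σ.res f))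

def Val {σ : Signature} (M : Model σ) := (s : σ.S) → ℕ → M.carrier s

open Classical in
noncomputable def Val.upd {σ : Signature} {M : Model σ} (ρ : Val M) (s : σ.S) (x : ℕ)
    (a : M.carrier s) : Val M :=
  fun s' y => if h : s' = s ∧ y = x then cast (congrArg M.carrier h.1).symm a else ρ s' y

/-- Pattern evaluation: the set of elements matching the pattern. -/
noncomputable def eval {σ : Signature} {M : Model σ} :
    {s : σ.S} → Pattern σ s → Val M → Set (M.carrier s)
  | _, .var s x, ρ => {ρ s x}
  | _, .app f args, ρ =>
      { b | ∃ a : ∀ i, M.carrier (σ.arg f i), (∀ i, a i ∈ eval (args i) ρ) ∧ b ∈ M.interp f a }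
  | _, .neg φ, ρ => (eval φ ρ)ᶜ
  | _, .and φ ψ, ρ => eval φ ρ ∩ eval ψ ρ
  | _, .ex s' x φ, ρ => ⋃ a : M.carrier s', eval φ (ρ.upd s' x a)

def Sat {σ : Signature} (M : Model σ) {s : σ.S} (φ : Pattern σ s) : Prop :=
  ∀ ρ : Val M, eval φ ρ = Set.univ

def Valid {σ : Signature} {s : σ.S} (φ : Pattern σ s) : Prop :=
  ∀ M : Model σ, Sat M φ

end ML

namespace ML

inductive PropForm (V : Type) : Type
  | var (v : V)
  | neg (p : PropForm V)
  | and (p q : PropForm V)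

def PropForm.evalb {V : Type} : PropForm V → (V → Bool) → Bool
  | .var v, θ => θ v
  | .neg p, θ => !(p.evalb θ)
  | .and p q, θ => p.evalb θ && q.evalb θ

/-- A propositional tautology: true under every two-valued valuation. -/
def PropForm.Tautology {V : Type} (p : PropForm V) : Prop :=
  ∀ θ : V → Bool, p.evalb θ = true

/-- Substitute patterns of sort `s` for the propositional variables. -/
def PropForm.substP {V : Type} {σ : Signature} {s : σ.S} :
    PropForm V → (V → Pattern σ s) → Pattern σ s
  | .var v, u => u v
  | .neg p, u => .neg (p.substP u)
  | .and p q, u => .and (p.substP u) (q.substP u)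

end ML

open Classical in
lemma stmt3_aux {V : Type} {σ : ML.Signature} {s : σ.S} (p : ML.PropForm V)
    (u : V → ML.Pattern σ s) (M : ML.Model σ) (ρ : ML.Val M) (b : M.carrier s) :
    b ∈ ML.eval (p.substP u) ρ ↔
      p.evalb (fun v => decide (b ∈ ML.eval (u v) ρ)) = true := by
  induction p with
  | var v => simp [ML.PropForm.substP, ML.PropForm.evalb]
  | neg q ih => simp [ML.PropForm.substP, ML.PropForm.evalb, ML.eval, ih]
  | and q r ihq ihr => simp [ML.PropForm.substP, ML.PropForm.evalb, ML.eval, ihq, ihr]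

/-- every propositional tautology instantiated with patterns of a
common sort is a valid matching logic pattern. -/
theorem stmt3 {V : Type} {σ : ML.Signature} {s : σ.S} (p : ML.PropForm V)
    (hp : p.Tautology) (u : V → ML.Pattern σ s) : ML.Valid (p.substP u) := by
  intro M ρ
  ext b
  simp only [Set.mem_univ, iff_true]
  exact (stmt3_aux p u M ρ b).mpr (hp _)
end

section
/- Symbol application commutes with existential quantification: ⊨ C[∃x.φᵢ] ↔ ∃x.C[φᵢ] when x does not occur free in the context C[□] = σ(φ₁,...,φ_{i-1},□,φ_{i+1},...,φₙ). -/
namespace ML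

variable {σ : Signature}

/-- The argument sort of a unary (definedness) symbol. -/
def arg1 (d : σ.Sym) (hn : σ.n d = 1) : σ.S := σ.arg d ⟨0, by omega⟩

/-- Definedness applied to a pattern: `⌈φ⌉`. -/
noncomputable def ceil (d : σ.Sym) (hn : σ.n d = 1) (φ : Pattern σ (arg1 d hn)) :
    Pattern σ (σ.res d) :=
  .app d (fun j => cast (by
    have hj : j = (⟨0, by omega⟩ : Fin (σ.n d)) := Fin.ext (by have := j.isLt; omega)
    rw [hj]; rfl) φ)

/-- The definedness axiom pattern `⌈x⌉`. -/
noncomputable def defAx (d : σ.Sym) (hn : σ.n d = 1) : Pattern σ (σ.res d) :=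
  ceil d hn (.var (arg1 d hn) 0)

/-- Totality `⌊φ⌋ ≡ ¬⌈¬φ⌉`. -/
noncomputable def floor (d : σ.Sym) (hn : σ.n d = 1) (φ : Pattern σ (arg1 d hn)) :
    Pattern σ (σ.res d) :=
  .neg (ceil d hn (.neg φ))

/-- Equality pattern `φ = φ' ≡ ⌊φ ↔ φ'⌋`. -/
noncomputable def eqP (d : σ.Sym) (hn : σ.n d = 1) (φ φ' : Pattern σ (arg1 d hn)) :
    Pattern σ (σ.res d) :=
  floor d hn (φ.piff φ')

/-- Membership pattern `x ∈ φ ≡ ⌈x ∧ φ⌉`. -/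
noncomputable def mem (d : σ.Sym) (hn : σ.n d = 1) (x : ℕ) (φ : Pattern σ (arg1 d hn)) :
    Pattern σ (σ.res d) :=
  ceil d hn ((Pattern.var (arg1 d hn) x).and φ)

/-- The context `σ(φ₁,…,□,…,φₙ)` with `ψ` plugged into the `i`-th position. -/
def plug (f : σ.Sym) (i : Fin (σ.n f)) (args : ∀ j : Fin (σ.n f), Pattern σ (σ.arg f j))
    (ψ : Pattern σ (σ.arg f i)) : Pattern σ (σ.res f) :=
  .app f (fun j => if h : j = i then cast (by rw [h]) ψ else args j)

/-- Bound variables of a pattern. -/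
def BV : {s : σ.S} → Pattern σ s → Set ((s : σ.S) × ℕ)
  | _, .var _ _ => ∅
  | _, .app _ args => ⋃ i, BV (args i)
  | _, .neg φ => BV φ
  | _, .and φ ψ => BV φ ∪ BV ψ
  | _, .ex s' x φ => BV φ ∪ {⟨s', x⟩}

open Classical in
/-- Substitution `φ[ψ/x]` of pattern `ψ` for variable `x` of sort `t` (capture-free
provided the bound variables of `φ` are disjoint from the free variables of `ψ`). -/
noncomputable def subst : {s : σ.S} → Pattern σ s → (t : σ.S) → ℕ → Pattern σ t → Pattern σ s
  | _, .var s' y, t, x, ψ =>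
      if h : s' = t ∧ y = x then cast (by rw [h.1]) ψ else .var s' y
  | _, .app f args, t, x, ψ => .app f (fun i => subst (args i) t x ψ)
  | _, .neg φ, t, x, ψ => .neg (subst φ t x ψ)
  | _, .and φ₁ φ₂, t, x, ψ => .and (subst φ₁ t x ψ) (subst φ₂ t x ψ)
  | _, .ex s' y φ, t, x, ψ =>
      if s' = t ∧ y = x then .ex s' y φ else .ex s' y (subst φ t x ψ)

/-- Semantic entailment from a set of axiom patterns. -/
def Entails (F : Set ((s : σ.S) × Pattern σ s)) {s : σ.S} (φ : Pattern σ s) : Prop :=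
  ∀ M : Model σ, (∀ ψ ∈ F, Sat M ψ.2) → Sat M φ

/-- A pattern is functional in `M` iff it evaluates to a singleton under every valuation. -/
def Functional (M : Model σ) {s : σ.S} (φ : Pattern σ s) : Prop :=
  ∀ ρ : Val M, ∃ a : M.carrier s, eval φ ρ = {a}

end ML

namespace ML

theorem eval_congr {σ : Signature} {M : Model σ} :
    ∀ {s : σ.S} (φ : Pattern σ s) (ρ ρ' : Val M),
      (∀ p ∈ FV φ, ρ p.1 p.2 = ρ' p.1 p.2) → eval φ ρ = eval φ ρ'
  | _, .var s x, ρ, ρ', h => by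
      simp only [eval]; rw [h ⟨s, x⟩ rfl]
  | _, .app f args, ρ, ρ', h => by
      simp only [eval]
      have : ∀ i, eval (args i) ρ = eval (args i) ρ' := fun i =>
        eval_congr (args i) ρ ρ' (fun p hp => h p (Set.mem_iUnion.2 ⟨i, hp⟩))
      simp only [this]
  | _, .neg φ, ρ, ρ', h => by
      simp only [eval]; rw [eval_congr φ ρ ρ' h]
  | _, .and φ ψ, ρ, ρ', h => by
      simp only [eval]
      rw [eval_congr φ ρ ρ' (fun p hp => h p (Or.inl hp)),
          eval_congr ψ ρ ρ' (fun p hp => h p (Or.inr hp))]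
  | _, .ex s' x φ, ρ, ρ', h => by
      simp only [eval]
      refine Set.iUnion_congr (fun a => eval_congr φ _ _ (fun p hp => ?_))
      unfold Val.upd
      by_cases hc : p.1 = s' ∧ p.2 = x
      · simp [hc]
      · simp only [hc, dif_neg, not_false_iff]
        exact h p ⟨hp, by rintro rfl; exact hc ⟨rfl, rfl⟩⟩

theorem eval_piff_univ {σ : Signature} {M : Model σ} {s : σ.S}
    (φ ψ : Pattern σ s) (ρ : Val M) (h : eval φ ρ = eval ψ ρ) :
    eval (φ.piff ψ) ρ = Set.univ := by
  simp only [Pattern.piff, Pattern.imp, Pattern.or, eval, h]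
  ext b; constructor <;> simp <;> tauto

end ML

/-- symbol application commutes with existential quantification:
`⊨ C[∃x.φ] ↔ ∃x.C[φ]` when `x` does not occur free in the context. -/
theorem stmt8 {σ : ML.Signature} (f : σ.Sym) (i : Fin (σ.n f))
    (args : ∀ j : Fin (σ.n f), ML.Pattern σ (σ.arg f j))
    (sx : σ.S) (x : ℕ) (φ : ML.Pattern σ (σ.arg f i))
    (hx : ∀ j, j ≠ i → (⟨sx, x⟩ : (t : σ.S) × ℕ) ∉ ML.FV (args j)) :
    ML.Valid ((ML.plug f i args (ML.Pattern.ex sx x φ)).piff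
      (ML.Pattern.ex sx x (ML.plug f i args φ))) ∧
    ∀ (M : ML.Model σ) (ρ : ML.Val M),
      ML.eval (ML.plug f i args (ML.Pattern.ex sx x φ)) ρ =
        ML.eval (ML.Pattern.ex sx x (ML.plug f i args φ)) ρ := by
  have key : ∀ (M : ML.Model σ) (ρ : ML.Val M),
      ML.eval (ML.plug f i args (ML.Pattern.ex sx x φ)) ρ =
        ML.eval (ML.Pattern.ex sx x (ML.plug f i args φ)) ρ := by
    intro M ρ
    have hargs : ∀ (c : M.carrier sx) (j : Fin (σ.n f)), j ≠ i →
        ML.eval (args j) (ρ.upd sx x c) = ML.eval (args j) ρ := by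
      intro c j hj
      refine ML.eval_congr (args j) _ _ (fun p hp => ?_)
      unfold ML.Val.upd
      have : ¬(p.1 = sx ∧ p.2 = x) := by
        rintro ⟨h1, h2⟩
        exact hx j hj (by cases p; cases h1; cases h2; exact hp)
      simp [this]
    ext b
    simp only [ML.plug, ML.eval, Set.mem_setOf_eq, Set.mem_iUnion]
    constructor
    · rintro ⟨a, ha, hb⟩
      have hi := ha i
      simp only [dif_pos rfl, ↓reduceDIte, cast_eq, ML.eval, Set.mem_iUnion] at hi
      obtain ⟨c, hc⟩ := hi
      refine ⟨c, a, fun j => ?_, hb⟩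
      by_cases hj : j = i
      · subst hj; simpa using hc
      · simp only [dif_neg hj, hargs c j hj]
        have := ha j; simpa [dif_neg hj] using this
    · rintro ⟨c, a, ha, hb⟩
      refine ⟨a, fun j => ?_, hb⟩
      by_cases hj : j = i
      · subst hj
        simp only [dif_pos rfl, ↓reduceDIte, cast_eq, ML.eval, Set.mem_iUnion]
        exact ⟨c, by simpa using ha j⟩
      · have := ha j
        simp only [dif_neg hj, hargs c j hj] at this
        simpa [dif_neg hj] using this
  exact ⟨fun M ρ => ML.eval_piff_univ _ _ ρ (key M ρ), key⟩
end

section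
/- If C[□] is an injective context in a specification (S,Σ,F), then for all patterns φᵢ, φᵢ' of the appropriate sort, F ⊨ C[φᵢ] ∧ C[φᵢ'] → C[φᵢ ∧ φᵢ']. -/
section MLAux
open ML

variable {σ : ML.Signature} {M : ML.Model σ}

theorem eval_congr : ∀ {s : σ.S} (φ : ML.Pattern σ s) (ρ ρ' : ML.Val M),
    (∀ p ∈ ML.FV φ, ρ p.1 p.2 = ρ' p.1 p.2) → ML.eval φ ρ = ML.eval φ ρ'
  | _, .var s x, ρ, ρ', h => by
      have := h ⟨s, x⟩ rfl
      simp only [ML.eval]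
      rw [this]
  | _, .app f args, ρ, ρ', h => by
      simp only [ML.eval]
      have he : ∀ j, ML.eval (args j) ρ = ML.eval (args j) ρ' := fun j =>
        eval_congr (args j) ρ ρ' (fun p hp => h p (Set.mem_iUnion.2 ⟨j, hp⟩))
      simp only [he]
  | _, .neg φ, ρ, ρ', h => by
      simp only [ML.eval, eval_congr φ ρ ρ' h]
  | _, .and φ ψ, ρ, ρ', h => by
      simp only [ML.eval, eval_congr φ ρ ρ' (fun p hp => h p (Or.inl hp)),
        eval_congr ψ ρ ρ' (fun p hp => h p (Or.inr hp))]
  | _, .ex s' z φ, ρ, ρ', h => by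
      simp only [ML.eval]
      refine Set.iUnion_congr fun a => ?_
      refine eval_congr φ _ _ (fun p hp => ?_)
      unfold ML.Val.upd
      by_cases hc : p.1 = s' ∧ p.2 = z
      · simp only [hc, and_self, dif_pos]
      · rw [dif_neg hc, dif_neg hc]
        refine h p ⟨hp, ?_⟩
        intro he
        apply hc
        cases he
        exact ⟨rfl, rfl⟩

theorem mem_eval_imp {s : σ.S} {φ ψ : ML.Pattern σ s} {ρ : ML.Val M} {b : M.carrier s} :
    b ∈ ML.eval (φ.imp ψ) ρ ↔ (b ∈ ML.eval φ ρ → b ∈ ML.eval ψ ρ) := by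
  simp only [ML.Pattern.imp, ML.Pattern.or, ML.eval, Set.mem_compl_iff, Set.mem_inter_iff,
    not_and, not_not]

theorem mem_eval_plug {f : σ.Sym} {i : Fin (σ.n f)}
    {args : ∀ j : Fin (σ.n f), ML.Pattern σ (σ.arg f j)} {ψ : ML.Pattern σ (σ.arg f i)}
    {ρ : ML.Val M} {b : M.carrier (σ.res f)} :
    b ∈ ML.eval (ML.plug f i args ψ) ρ ↔
      ∃ a : ∀ j, M.carrier (σ.arg f j),
        (∀ j, j ≠ i → a j ∈ ML.eval (args j) ρ) ∧ a i ∈ ML.eval ψ ρ ∧ b ∈ M.interp f a := by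
  simp only [ML.plug, ML.eval, Set.mem_setOf_eq]
  constructor
  · rintro ⟨a, ha, hb⟩
    refine ⟨a, fun j hj => ?_, ?_, hb⟩
    · have := ha j; rwa [dif_neg hj] at this
    · have := ha i; rwa [dif_pos rfl, cast_eq] at this
  · rintro ⟨a, ha, hai, hb⟩
    refine ⟨a, fun j => ?_, hb⟩
    by_cases hj : j = i
    · subst hj; rwa [dif_pos rfl, cast_eq]
    · rw [dif_neg hj]; exact ha j hj

end MLAux


/-- if `C[□]` is an injective context in `(S,Σ,F)`, then for all
patterns `φᵢ, φᵢ'`, `F ⊨ C[φᵢ] ∧ C[φᵢ'] → C[φᵢ ∧ φᵢ']`. -/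
theorem stmt9 {σ : ML.Signature} (F : Set ((s : σ.S) × ML.Pattern σ s))
    (f : σ.Sym) (i : Fin (σ.n f))
    (args : ∀ j : Fin (σ.n f), ML.Pattern σ (σ.arg f j)) (x y : ℕ) (hxy : x ≠ y)
    (hx : ∀ j, j ≠ i → (⟨σ.arg f i, x⟩ : (t : σ.S) × ℕ) ∉ ML.FV (args j))
    (hy : ∀ j, j ≠ i → (⟨σ.arg f i, y⟩ : (t : σ.S) × ℕ) ∉ ML.FV (args j))
    (hinj : ML.Entails F
      (((ML.plug f i args (ML.Pattern.var (σ.arg f i) x)).and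
          (ML.plug f i args (ML.Pattern.var (σ.arg f i) y))).imp
        (ML.plug f i args ((ML.Pattern.var (σ.arg f i) x).and
          (ML.Pattern.var (σ.arg f i) y)))))
    (φ φ' : ML.Pattern σ (σ.arg f i)) :
    ML.Entails F (((ML.plug f i args φ).and (ML.plug f i args φ')).imp
      (ML.plug f i args (φ.and φ'))) := by
  intro M hF ρ
  rw [Set.eq_univ_iff_forall]
  intro b
  rw [mem_eval_imp]
  intro hb
  rw [show ML.eval ((ML.plug f i args φ).and (ML.plug f i args φ')) ρ =
      ML.eval (ML.plug f i args φ) ρ ∩ ML.eval (ML.plug f i args φ') ρ from rfl] at hb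
  obtain ⟨a, ha, hai, hab⟩ := mem_eval_plug.1 hb.1
  obtain ⟨a', ha', hai', hab'⟩ := mem_eval_plug.1 hb.2
  -- the modified valuation
  set s₀ := σ.arg f i with hs₀
  set ρ' : ML.Val M := (ρ.upd s₀ x (a i)).upd s₀ y (a' i) with hρ'
  have hρ'x : ρ' s₀ x = a i := by
    rw [hρ']
    unfold ML.Val.upd
    rw [dif_neg (fun h => hxy h.2), dif_pos ⟨rfl, rfl⟩, cast_eq]
  have hρ'y : ρ' s₀ y = a' i := by
    rw [hρ']
    unfold ML.Val.upd
    rw [dif_pos ⟨rfl, rfl⟩, cast_eq]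
  -- ρ' agrees with ρ away from (s₀, x) and (s₀, y)
  have hagree : ∀ p : (t : σ.S) × ℕ, p ≠ ⟨s₀, x⟩ → p ≠ ⟨s₀, y⟩ → ρ p.1 p.2 = ρ' p.1 p.2 := by
    intro p hpx hpy
    rw [hρ']
    unfold ML.Val.upd
    rw [dif_neg (fun h => hpy (Sigma.ext h.1 (heq_of_eq h.2))),
      dif_neg (fun h => hpx (Sigma.ext h.1 (heq_of_eq h.2)))]
  have hargs : ∀ j, j ≠ i → ML.eval (args j) ρ = ML.eval (args j) (M := M) ρ' := by
    intro j hj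
    refine eval_congr (args j) ρ ρ' (fun p hp => ?_)
    exact hagree p (fun h => hx j hj (h ▸ hp)) (fun h => hy j hj (h ▸ hp))
  -- apply injectivity at ρ'
  have hinj' := (hinj M hF ρ').symm ▸ Set.mem_univ b
  have hmain : b ∈ ML.eval (ML.plug f i args ((ML.Pattern.var s₀ x).and
      (ML.Pattern.var s₀ y))) ρ' := by
    have h1 : b ∈ ML.eval (ML.plug f i args (ML.Pattern.var s₀ x)) ρ' :=
      mem_eval_plug.2 ⟨a, fun j hj => (hargs j hj) ▸ ha j hj, by
        exact hρ'x.symm, hab⟩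
    have h2 : b ∈ ML.eval (ML.plug f i args (ML.Pattern.var s₀ y)) ρ' :=
      mem_eval_plug.2 ⟨a', fun j hj => (hargs j hj) ▸ ha' j hj, by
        exact hρ'y.symm, hab'⟩
    have := hinj M hF ρ'
    rw [Set.eq_univ_iff_forall] at this
    exact mem_eval_imp.1 (this b) ⟨h1, h2⟩
  obtain ⟨c, hc, hci, hcb⟩ := mem_eval_plug.1 hmain
  have hcx : c i = a i := by
    have := hci.1; rw [ML.eval, Set.mem_singleton_iff, hρ'x] at this; exact this
  have hcy : c i = a' i := by
    have := hci.2; rw [ML.eval, Set.mem_singleton_iff, hρ'y] at this; exact this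
  exact mem_eval_plug.2 ⟨c, fun j hj => (hargs j hj).symm ▸ hc j hj,
    ⟨hcx ▸ hai, hcy ▸ hai'⟩, hcb⟩
end

section
/- Equality elimination is valid in matching logic: ⊨ (φ₁ = φ₂) ∧ φ[φ₁/x] → φ[φ₂/x], where = is the defined matching logic equality and φ[ψ/x] is capture-free substitution. -/
namespace ML

variable {σ : Signature}

/-! ### Auxiliary lemmas for stmt14 -/

lemma upd_ne {M : Model σ} (ρ : Val M) {s : σ.S} {x : ℕ} {a : M.carrier s}
    {s' : σ.S} {y : ℕ} (h : ¬(s' = s ∧ y = x)) : ρ.upd s x a s' y = ρ s' y := by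
  simp [Val.upd, h]

lemma upd_same {M : Model σ} (ρ : Val M) (s : σ.S) (x : ℕ) (a : M.carrier s) :
    ρ.upd s x a s x = a := by
  simp [Val.upd]

/-- Evaluation only depends on the valuation's values on free variables. -/
lemma eval_congrFV {M : Model σ} : ∀ {s : σ.S} (φ : Pattern σ s) (ρ ρ' : Val M),
    (∀ v ∈ FV φ, ρ v.1 v.2 = ρ' v.1 v.2) → eval φ ρ = eval φ ρ' := by
  intro s φ
  induction φ with
  | var s x =>
      intro ρ ρ' h
      have := h ⟨s, x⟩ (by simp [FV])
      simp only [eval]; rw [this]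
  | app f args ih =>
      intro ρ ρ' h
      have harg : ∀ i, eval (args i) ρ = eval (args i) ρ' := fun i =>
        ih i ρ ρ' (fun v hv => h v (by simp only [FV, Set.mem_iUnion]; exact ⟨i, hv⟩))
      simp only [eval]
      ext b
      constructor <;> rintro ⟨a, h1, h2⟩ <;> refine ⟨a, fun i => ?_, h2⟩
      · rw [← harg i]; exact h1 i
      · rw [harg i]; exact h1 i
  | neg φ ih =>
      intro ρ ρ' h
      simp only [eval]; rw [ih ρ ρ' h]
  | and φ ψ ih1 ih2 =>
      intro ρ ρ' h
      simp only [eval]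
      rw [ih1 ρ ρ' (fun v hv => h v (Or.inl hv)), ih2 ρ ρ' (fun v hv => h v (Or.inr hv))]
  | ex s' y φ ih =>
      intro ρ ρ' h
      simp only [eval]
      refine Set.iUnion_congr fun a => ?_
      apply ih
      intro v hv
      by_cases hv' : v.1 = s' ∧ v.2 = y
      · have : v = ⟨s', y⟩ := Sigma.ext hv'.1 (heq_of_eq hv'.2)
        subst this
        rw [upd_same, upd_same]
      · rw [upd_ne ρ hv', upd_ne ρ' hv']
        exact h v ⟨hv, by rintro rfl; exact hv' ⟨rfl, rfl⟩⟩

/-- Substitution semantics: `eval (φ[ψ/x])` depends on `ψ` only through its evaluations,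
provided the substitutions are capture-free. -/
lemma subst_semantic {M : Model σ} {t : σ.S} (ψ₁ ψ₂ : Pattern σ t) (x : ℕ) :
    ∀ {s : σ.S} (φ : Pattern σ s),
    (∀ v ∈ FV ψ₁, v ∉ BV φ) → (∀ v ∈ FV ψ₂, v ∉ BV φ) →
    ∀ ρ : Val M, eval ψ₁ ρ = eval ψ₂ ρ →
    eval (subst φ t x ψ₁) ρ = eval (subst φ t x ψ₂) ρ := by
  intro s φ
  induction φ with
  | var s y =>
      intro _ _ ρ hψ
      by_cases h : s = t ∧ y = x
      · obtain ⟨h1, h2⟩ := h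
        subst h1; subst h2
        simp only [subst, dif_pos (⟨rfl, rfl⟩ : s = s ∧ y = y), cast_eq]
        exact hψ
      · simp only [subst, dif_neg h]
  | app f args ih =>
      intro hb1 hb2 ρ hψ
      have harg : ∀ i, eval (subst (args i) t x ψ₁) ρ = eval (subst (args i) t x ψ₂) ρ := by
        intro i
        refine ih i (fun v hv hbv => hb1 v hv ?_) (fun v hv hbv => hb2 v hv ?_) ρ hψ <;>
          · simp only [BV, Set.mem_iUnion]; exact ⟨i, hbv⟩
      simp only [subst, eval]
      ext b
      constructor <;> rintro ⟨a, h1, h2⟩ <;> refine ⟨a, fun i => ?_, h2⟩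
      · rw [← harg i]; exact h1 i
      · rw [harg i]; exact h1 i
  | neg φ ih =>
      intro hb1 hb2 ρ hψ
      simp only [subst, eval]
      rw [ih hb1 hb2 ρ hψ]
  | and φ φ' ih1 ih2 =>
      intro hb1 hb2 ρ hψ
      simp only [subst, eval]
      rw [ih1 (fun v hv hbv => hb1 v hv (Or.inl hbv)) (fun v hv hbv => hb2 v hv (Or.inl hbv)) ρ hψ,
          ih2 (fun v hv hbv => hb1 v hv (Or.inr hbv)) (fun v hv hbv => hb2 v hv (Or.inr hbv)) ρ hψ]
  | ex s' y φ ih =>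
      intro hb1 hb2 ρ hψ
      by_cases h : s' = t ∧ y = x
      · simp only [subst, if_pos h]
      · simp only [subst, if_neg h, eval]
        refine Set.iUnion_congr fun a => ?_
        have hfree1 : (⟨s', y⟩ : (s : σ.S) × ℕ) ∉ FV ψ₁ := fun hmem =>
          hb1 _ hmem (Or.inr rfl)
        have hfree2 : (⟨s', y⟩ : (s : σ.S) × ℕ) ∉ FV ψ₂ := fun hmem =>
          hb2 _ hmem (Or.inr rfl)
        have key : eval ψ₁ (ρ.upd s' y a) = eval ψ₂ (ρ.upd s' y a) := by
          have e1 : eval ψ₁ (ρ.upd s' y a) = eval ψ₁ ρ := by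
            apply eval_congrFV
            intro v hv
            apply upd_ne
            rintro ⟨h1, h2⟩
            exact hfree1 (by have : v = ⟨s', y⟩ := Sigma.ext h1 (heq_of_eq h2); rwa [this] at hv)
          have e2 : eval ψ₂ (ρ.upd s' y a) = eval ψ₂ ρ := by
            apply eval_congrFV
            intro v hv
            apply upd_ne
            rintro ⟨h1, h2⟩
            exact hfree2 (by have : v = ⟨s', y⟩ := Sigma.ext h1 (heq_of_eq h2); rwa [this] at hv)
          rw [e1, e2, hψ]
        exact ih (fun v hv hbv => hb1 v hv (Or.inl hbv))
          (fun v hv hbv => hb2 v hv (Or.inl hbv)) _ key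

/-- From the definedness axiom: `⌈ψ⌉` evaluates to `univ` whenever `ψ` evaluates to a
nonempty set. -/
lemma ceil_univ {M : Model σ} (d : σ.Sym) (hn : σ.n d = 1) (hdef : Sat M (defAx d hn))
    (ψ : Pattern σ (arg1 d hn)) (ρ : Val M) (hne : (eval ψ ρ : Set _).Nonempty) :
    eval (ceil d hn ψ) ρ = Set.univ := by
  obtain ⟨c, hc⟩ := hne
  apply Set.eq_univ_of_forall
  intro b
  classical
  let ρ0 : Val M := fun s _ => Classical.choice (M.nonempty s)
  have hax := hdef (ρ0.upd (arg1 d hn) 0 c)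
  have hb : b ∈ eval (defAx d hn) (ρ0.upd (arg1 d hn) 0 c) := hax ▸ Set.mem_univ b
  simp only [defAx, ceil, eval, Set.mem_setOf_eq] at hb
  obtain ⟨a, ha1, ha2⟩ := hb
  simp only [ceil, eval, Set.mem_setOf_eq]
  refine ⟨a, ?_, ha2⟩
  intro j
  have hlt : 0 < σ.n d := by omega
  have hj : j = (⟨0, hlt⟩ : Fin (σ.n d)) := Fin.ext (by have := j.isLt; omega)
  subst hj
  have h1 : a ⟨0, hlt⟩ ∈ eval (M := M) (Pattern.var (arg1 d hn) 0)
      (ρ0.upd (arg1 d hn) 0 c) := ha1 _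
  have h2 : a ⟨0, hlt⟩ = c := by
    simp only [eval, Set.mem_singleton_iff] at h1
    rw [h1]; exact upd_same ρ0 _ _ _
  show a ⟨0, hlt⟩ ∈ eval (M := M) ψ ρ
  rw [h2]; exact hc

end ML

/-- Equality elimination: `⊨ (φ₁ = φ₂) ∧ φ[φ₁/x] → φ[φ₂/x]`,
where the substitutions are capture-free (the free variables of `φ₁, φ₂` avoid
the bound variables of `φ`). -/
theorem stmt14 {σ : ML.Signature} (d : σ.Sym) (hn : σ.n d = 1)
    (φ₁ φ₂ : ML.Pattern σ (ML.arg1 d hn)) (x : ℕ) (φ : ML.Pattern σ (σ.res d))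
    (hc1 : ∀ v ∈ ML.FV φ₁, v ∉ ML.BV φ) (hc2 : ∀ v ∈ ML.FV φ₂, v ∉ ML.BV φ) :
    ∀ M : ML.Model σ, ML.Sat M (ML.defAx d hn) →
      ML.Sat M (((ML.eqP d hn φ₁ φ₂).and (ML.subst φ (ML.arg1 d hn) x φ₁)).imp
        (ML.subst φ (ML.arg1 d hn) x φ₂)) := by
  intro M hdef ρ
  apply Set.eq_univ_of_forall
  intro b
  simp only [ML.Pattern.imp, ML.Pattern.or, ML.eval, Set.mem_compl_iff, Set.mem_inter_iff,
    compl_compl, not_and, not_not]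
  intro hb
  obtain ⟨hb1, hb2⟩ := hb
  -- from the equality conjunct, the evaluations of φ₁ and φ₂ agree
  have hempty : ML.eval (M := M) ((φ₁.piff φ₂).neg) ρ = ∅ := by
    by_contra h
    have huniv := ML.ceil_univ d hn hdef _ ρ (Set.nonempty_iff_ne_empty.mpr h)
    exact hb1 (show b ∈ ML.eval (ML.ceil d hn (φ₁.piff φ₂).neg) ρ from
      huniv ▸ Set.mem_univ b)
  have hpiff : ML.eval (M := M) (φ₁.piff φ₂) ρ = Set.univ := by
    have : (ML.eval (M := M) (φ₁.piff φ₂) ρ)ᶜ = ∅ := hempty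
    rwa [Set.compl_empty_iff] at this
  have heq : ML.eval (M := M) φ₁ ρ = ML.eval (M := M) φ₂ ρ := by
    ext c
    have h1 := Set.eq_univ_iff_forall.mp hpiff c
    simp only [ML.Pattern.piff, ML.Pattern.imp, ML.Pattern.or, ML.eval, Set.mem_inter_iff,
      Set.mem_compl_iff, not_and, not_not] at h1
    tauto
  rw [← ML.subst_semantic φ₁ φ₂ x φ hc1 hc2 ρ heq]
  exact hb2
end
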